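/- arXiv:math/0009221 — 3 statements merged into one kernel-verified Lean document; each statement's English description precedes it below -/
import Mathlib

section
/- Let A be a unital C*-algebra, let x ∈ A be invertible, and let w ∈ A be positive invertible with ‖w‖ < 1 and x x* = (1-w)^2 w⁻¹. Define a = (1+w)^{-1/2} w^{1/2}, b = (1+w)^{-1/2}, c = x⁻¹ (1+w)^{-1/2} w^{-1/2} (1-w), d = -x⁻¹ (1+w)^{-1/2} (1-w). Then a a* + b b* = 1 and c c* + d d* = 1. -/
open scoped NNReal

private lemma stmt3_commute_inv_left {A : Type*} [Ring A] {a a' b : A} (h : Commute a b)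
    (h1 : a * a' = 1) (h2 : a' * a = 1) : Commute a' b := by
  have h3 : a' * (a * b) * a' = a' * (b * a) * a' := by rw [h.eq]
  have lhs : a' * (a * b) * a' = b * a' := by rw [← mul_assoc, h2, one_mul]
  have rhs : a' * (b * a) * a' = a' * b := by rw [mul_assoc, mul_assoc, h1, mul_one]
  rw [lhs, rhs] at h3
  exact h3.symm

private lemma stmt3_commute_rinv_right {A : Type*} [Ring A] {a b : A} (h : Commute a b) :
    Commute a (Ring.inverse b) := by
  by_cases hb : IsUnit b
  · obtain ⟨u, rfl⟩ := hb
    rw [Ring.inverse_unit]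
    exact h.units_inv_right
  · rw [Ring.inverse_non_unit _ hb]; exact Commute.zero_right a

private lemma stmt3_isUnit_of_sq {A : Type*} [Ring A] {s u : A} (h : s * s = u) (hu : IsUnit u) :
    IsUnit s := by
  have hc : Commute s (Ring.inverse u) :=
    stmt3_commute_rinv_right (h ▸ ((Commute.refl s).mul_right (Commute.refl s)))
  refine isUnit_iff_exists.2 ⟨s * Ring.inverse u, ?_, ?_⟩
  · rw [← mul_assoc, h, Ring.mul_inverse_cancel _ hu]
  · rw [mul_assoc, ← hc.eq, ← mul_assoc, h, Ring.mul_inverse_cancel _ hu]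

private lemma stmt3_aux {A : Type*} [Ring A] [StarRing A] (x x' w w' s s' t t' m : A)
    (hm : m = 1 - w)
    (hs : s * s = w) (ht : t * t = 1 + w)
    (hss' : s * s' = 1) (hs's : s' * s = 1)
    (htt' : t * t' = 1) (ht't : t' * t = 1)
    (hww' : w * w' = 1) (hw'w : w' * w = 1)
    (hx'x : x' * x = 1)
    (hstars : star s = s) (hstart : star t = t) (hstarw : star w = w)
    (cst : Commute s t)
    (hxx : x * star x = m * m * w') :
    (t' * s) * star (t' * s) + t' * star t' = 1 ∧
    (x' * t' * s' * m) * star (x' * t' * s' * m) +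
      (-(x' * t' * m)) * star (-(x' * t' * m)) = 1 := by
  -- star of inverses
  have hstart' : star t' = t' := by
    have h1 : star t' * t = 1 := by rw [← hstart, ← star_mul, htt', star_one]
    calc star t' = star t' * (t * t') := by rw [htt', mul_one]
      _ = star t' * t * t' := by rw [mul_assoc]
      _ = t' := by rw [h1, one_mul]
  have hstars' : star s' = s' := by
    have h1 : star s' * s = 1 := by rw [← hstars, ← star_mul, hss', star_one]
    calc star s' = star s' * (s * s') := by rw [hss', mul_one]
      _ = star s' * s * s' := by rw [mul_assoc]
      _ = s' := by rw [h1, one_mul]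
  have hstarm : star m = m := by rw [hm, star_sub, star_one, hstarw]
  -- commutation relations
  have csw : Commute s w := hs ▸ ((Commute.refl s).mul_right (Commute.refl s))
  have ctw : Commute t w := by
    have h1 : Commute t (1 + w) := ht ▸ ((Commute.refl t).mul_right (Commute.refl t))
    have h2 := h1.sub_right (Commute.one_right t)
    simpa using h2
  have cwm : Commute w m := hm ▸ ((Commute.one_right w).sub_right (Commute.refl w))
  have csm : Commute s m := hm ▸ ((Commute.one_right s).sub_right csw)
  have ctm : Commute t m := hm ▸ ((Commute.one_right t).sub_right ctw)
  have cs't : Commute s' t := stmt3_commute_inv_left cst hss' hs's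
  have cs't' : Commute s' t' := (stmt3_commute_inv_left cs't.symm htt' ht't).symm
  have cs'm : Commute s' m := stmt3_commute_inv_left csm hss' hs's
  have ct'm : Commute t' m := stmt3_commute_inv_left ctm htt' ht't
  have ct'w : Commute t' w := stmt3_commute_inv_left ctw htt' ht't
  have ct'w' : Commute t' w' := (stmt3_commute_inv_left ct'w.symm hww' hw'w).symm
  have cw'm : Commute w' m := stmt3_commute_inv_left cwm hww' hw'w
  constructor
  · rw [star_mul, hstars, hstart']
    have e1 : t' * s * (s * t') = t' * (w * t') := by rw [mul_assoc, ← mul_assoc s s, hs]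
    rw [e1, show t' * t' = t' * (1 * t') from by rw [one_mul], ← mul_add, ← add_mul,
      add_comm w 1, ← ht, mul_assoc t t t', htt', mul_one, ht't]
  · simp only [star_neg, star_mul, neg_mul_neg, hstarm, hstars', hstart']
    -- reassociation and commutation
    have comm1 : m * (s' * (t' * star x')) = t' * (s' * m) * star x' := by
      rw [show m * (s' * (t' * star x')) = (m * (s' * t')) * star x' from by
        rw [mul_assoc, mul_assoc], ← mul_assoc m s' t', cs'm.symm.eq,
        (cs't'.mul_left ct'm.symm).eq]
    have comm2 : m * (t' * star x') = t' * m * star x' := by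
      rw [← mul_assoc, ct'm.symm.eq]
    have E1 : x' * t' * s' * m * (m * (s' * (t' * star x'))) =
        x' * ((t' * (s' * m)) * (t' * (s' * m))) * star x' := by
      rw [comm1]; noncomm_ring
    have E2 : x' * t' * m * (m * (t' * star x')) =
        x' * ((t' * m) * (t' * m)) * star x' := by
      rw [comm2]; noncomm_ring
    have hs's'w : s' * s' = w' := by
      have h0 : s' * s' * (s * s) = 1 := by
        rw [mul_assoc s' s', ← mul_assoc s' s, hs's, one_mul, hs's]
      calc s' * s' = s' * s' * (w * w') := by rw [hww', mul_one]
        _ = s' * s' * (s * s) * w' := by rw [← hs, ← mul_assoc]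
        _ = w' := by rw [h0, one_mul]
    have hQQ : (t' * (s' * m)) * (t' * (s' * m)) = (t' * t') * (w' * (m * m)) := by
      rw [(cs't'.mul_left ct'm.symm).mul_mul_mul_comm t' (s' * m),
        cs'm.symm.mul_mul_mul_comm s' m, hs's'w]
    have hRR : (t' * m) * (t' * m) = (t' * t') * (m * m) :=
      ct'm.symm.mul_mul_mul_comm t' m
    have ctt'w' : Commute (t' * t') w' := ct'w'.mul_left ct'w'
    have cw'mm : Commute w' (m * m) := cw'm.mul_right cw'm
    have htt4 : t' * t' * (1 + w) = 1 := by
      rw [← ht, mul_assoc t' t', ← mul_assoc t' t t, ht't, one_mul, ht't]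
    have key : (t' * t') * (w' * (m * m)) + (t' * t') * (m * m) = m * m * w' := by
      rw [← mul_add, show w' * (m * m) + m * m = (w' + 1) * (m * m) from by
          rw [add_mul, one_mul],
        show w' + 1 = w' * (1 + w) from by rw [mul_add, mul_one, hw'w],
        mul_assoc w' (1 + w) (m * m), ← mul_assoc (t' * t') w', ctt'w'.eq,
        mul_assoc w' (t' * t'), ← mul_assoc (t' * t') (1 + w), htt4, one_mul]
      exact cw'mm.eq
    rw [E1, E2, hQQ, hRR, ← add_mul, ← mul_add, key, ← hxx, ← mul_assoc x' x, hx'x,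
      one_mul, ← star_mul, hx'x, star_one]

/-- Rows of the matrix `U` from Lemma 4 are normalized: `a a* + b b* = 1` and `c c* + d d* = 1`
. -/
theorem stmt_3 {A : Type*} [CStarAlgebra A] [PartialOrder A] [StarOrderedRing A]
    (x w a b c d : A) (hx : IsUnit x) (hw0 : 0 ≤ w) (hw : IsUnit w) (hwn : ‖w‖ < 1)
    (hxx : x * star x = (1 - w)^2 * Ring.inverse w)
    (ha : a = Ring.inverse (CFC.sqrt (1 + w)) * CFC.sqrt w)
    (hb : b = Ring.inverse (CFC.sqrt (1 + w)))
    (hc : c = Ring.inverse x * Ring.inverse (CFC.sqrt (1 + w)) * Ring.inverse (CFC.sqrt w) * (1 - w))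
    (hd : d = -(Ring.inverse x * Ring.inverse (CFC.sqrt (1 + w)) * (1 - w))) :
    a * star a + b * star b = 1 ∧ c * star c + d * star d = 1 := by
  subst ha hb hc hd
  have h1w0 : (0 : A) ≤ 1 + w := add_nonneg zero_le_one hw0
  have hss : CFC.sqrt w * CFC.sqrt w = w := CFC.sqrt_mul_sqrt_self w hw0
  have htt : CFC.sqrt (1 + w) * CFC.sqrt (1 + w) = 1 + w := CFC.sqrt_mul_sqrt_self (1 + w) h1w0
  have hu1w : IsUnit ((1 : A) + w) := by
    have := (Units.oneSub (-w) (by simpa using hwn)).isUnit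
    simpa [sub_neg_eq_add] using this
  have hus : IsUnit (CFC.sqrt w) := stmt3_isUnit_of_sq hss hw
  have hut : IsUnit (CFC.sqrt (1 + w)) := stmt3_isUnit_of_sq htt hu1w
  have cst : Commute (CFC.sqrt w) (CFC.sqrt (1 + w)) := by
    have h1 : (1 : A) + w = cfc (fun y : ℝ≥0 => 1 + y) w := by
      have := cfc_const_add (1 : ℝ≥0) (id : ℝ≥0 → ℝ≥0) w
      simp only [id] at this
      rw [this, cfc_id ℝ≥0 w, map_one]
    have h2 : CFC.sqrt (1 + w) = cfc (fun y : ℝ≥0 => NNReal.sqrt (1 + y)) w := by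
      rw [CFC.sqrt_eq_cfc, h1, ← cfc_comp' NNReal.sqrt (fun y : ℝ≥0 => 1 + y) w
        (NNReal.continuous_sqrt.continuousOn)]
    rw [CFC.sqrt_eq_cfc, h2]
    exact cfc_commute_cfc _ _ w
  exact stmt3_aux x (Ring.inverse x) w (Ring.inverse w) (CFC.sqrt w) (Ring.inverse (CFC.sqrt w))
    (CFC.sqrt (1 + w)) (Ring.inverse (CFC.sqrt (1 + w))) (1 - w) rfl hss htt
    (Ring.mul_inverse_cancel _ hus) (Ring.inverse_mul_cancel _ hus)
    (Ring.mul_inverse_cancel _ hut) (Ring.inverse_mul_cancel _ hut)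
    (Ring.mul_inverse_cancel _ hw) (Ring.inverse_mul_cancel _ hw)
    (Ring.inverse_mul_cancel _ hx)
    (IsSelfAdjoint.of_nonneg (CFC.sqrt_nonneg w)).star_eq
    (IsSelfAdjoint.of_nonneg (CFC.sqrt_nonneg (1 + w))).star_eq
    (IsSelfAdjoint.of_nonneg hw0).star_eq cst (by rw [hxx, sq])
end

section
/- Let A be a unital C*-algebra, let x ∈ A be invertible, and let w ∈ A be positive invertible with ‖w‖ < 1 and x x* = (1-w)^2 w⁻¹. With a = (1+w)^{-1/2} w^{1/2}, b = (1+w)^{-1/2}, c = x⁻¹ (1+w)^{-1/2} w^{-1/2} (1-w), d = -x⁻¹ (1+w)^{-1/2} (1-w), the 2×2 matrix U = [[a, b],[c, d]] over A is unitary, i.e. U U* = I and U* U = I in M₂(A). -/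
open scoped NNReal

private lemma star_fin_two {A : Type*} [AddMonoid A] [StarAddMonoid A] (a b c d : A) :
    star !![a, b; c, d] = !![star a, star c; star b, star d] := by
  ext i j
  fin_cases i <;> fin_cases j <;> simp [Matrix.star_apply]

private lemma Commute.ringInverse_right {A : Type*} [Ring A] {a b : A}
    (h : Commute a b) (hb : IsUnit b) : Commute a (Ring.inverse b) := by
  obtain ⟨u, rfl⟩ := hb
  rw [Ring.inverse_unit]
  exact h.units_inv_right

/-- The matrix `U = [[a,b],[c,d]]` from Lemma 4 is unitary in `M₂(A)`. -/
theorem stmt_4 {A : Type*} [CStarAlgebra A] [PartialOrder A] [StarOrderedRing A]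
    (x w a b c d : A) (hx : IsUnit x) (hw0 : 0 ≤ w) (hw : IsUnit w) (hwn : ‖w‖ < 1)
    (hxx : x * star x = (1 - w)^2 * Ring.inverse w)
    (ha : a = Ring.inverse (CFC.sqrt (1 + w)) * CFC.sqrt w)
    (hb : b = Ring.inverse (CFC.sqrt (1 + w)))
    (hc : c = Ring.inverse x * Ring.inverse (CFC.sqrt (1 + w)) * Ring.inverse (CFC.sqrt w) * (1 - w))
    (hd : d = -(Ring.inverse x * Ring.inverse (CFC.sqrt (1 + w)) * (1 - w))) :
    !![a, b; c, d] * star !![a, b; c, d] = 1 ∧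
    star !![a, b; c, d] * !![a, b; c, d] = 1 := by
  set s : A := CFC.sqrt w with hs_def
  set t : A := CFC.sqrt (1 + w) with ht_def
  have h1w0 : (0:A) ≤ 1 + w := by
    calc (0:A) ≤ 1 := zero_le_one
    _ ≤ 1 + w := le_add_of_nonneg_right hw0
  have hs : s * s = w := CFC.sqrt_mul_sqrt_self w hw0
  have ht : t * t = 1 + w := CFC.sqrt_mul_sqrt_self _ h1w0
  -- commutation of the two square roots
  have hcfc1w : cfc (fun y : ℝ≥0 => 1 + y) w = 1 + w := by
    have h1 : cfc (fun y : ℝ≥0 => 1 + y) w = cfc (fun y : ℝ≥0 => (1 : ℝ≥0) + id y) w := rfl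
    rw [h1, cfc_const_add (1 : ℝ≥0) id w, cfc_id ℝ≥0 w, map_one]
  have hst : Commute s t := by
    rw [hs_def, ht_def, CFC.sqrt_eq_cfc, CFC.sqrt_eq_cfc (a := 1 + w), ← hcfc1w,
      ← cfc_comp' NNReal.sqrt (fun y : ℝ≥0 => 1 + y) w]
    exact cfc_commute_cfc _ _ w
  -- units
  have hmw : IsUnit (1 - w) := (Units.oneSub w hwn).isUnit
  have csw : Commute s w := hs ▸ (Commute.refl s).mul_right (Commute.refl s)
  have ct1w : Commute t (1 + w) := ht ▸ (Commute.refl t).mul_right (Commute.refl t)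
  have ctw : Commute t w := by
    have := ct1w.sub_right (Commute.one_right t)
    simpa using this
  have hus : IsUnit s := by
    refine isUnit_iff_exists.mpr ⟨s * Ring.inverse w, ?_, ?_⟩
    · rw [← mul_assoc, hs, Ring.mul_inverse_cancel w hw]
    · rw [mul_assoc, ← (csw.ringInverse_right hw).eq, ← mul_assoc, hs,
        Ring.mul_inverse_cancel w hw]
  have h1w : IsUnit (1 + w) := CStarAlgebra.isUnit_of_le 1
      (le_add_of_nonneg_right hw0) isStrictlyPositive_one
  have hut : IsUnit t := by
    refine isUnit_iff_exists.mpr ⟨t * Ring.inverse (1 + w), ?_, ?_⟩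
    · rw [← mul_assoc, ht, Ring.mul_inverse_cancel _ h1w]
    · rw [mul_assoc, ← (ct1w.ringInverse_right h1w).eq, ← mul_assoc, ht,
        Ring.mul_inverse_cancel _ h1w]
  set s₁ : A := Ring.inverse s with hs₁_def
  set t₁ : A := Ring.inverse t with ht₁_def
  set m₁ : A := Ring.inverse (1 - w) with hm₁_def
  set x₁ : A := Ring.inverse x with hx₁_def
  set y : A := Ring.inverse (star x) with hy_def
  -- commutation relations
  have csm : Commute s (1 - w) := (Commute.one_right s).sub_right csw
  have ctm : Commute t (1 - w) := (Commute.one_right t).sub_right ctw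
  have c1 : Commute s s₁ := (Commute.refl s).ringInverse_right hus
  have c2 : Commute s t₁ := hst.ringInverse_right hut
  have c3 : Commute s m₁ := csm.ringInverse_right hmw
  have c4 : Commute t s₁ := hst.symm.ringInverse_right hus
  have c5 : Commute t t₁ := (Commute.refl t).ringInverse_right hut
  have c6 : Commute t m₁ := ctm.ringInverse_right hmw
  have c7 : Commute s₁ t₁ := hst.ringInverse_ringInverse
  have c8 : Commute s₁ m₁ := csm.ringInverse_ringInverse
  have c9 : Commute t₁ m₁ := ctm.ringInverse_ringInverse
  -- the commutative subring generated by these elements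
  have hcomm : ∀ p ∈ ({s, t, s₁, t₁, m₁} : Set A), ∀ q ∈ ({s, t, s₁, t₁, m₁} : Set A),
      p * q = q * p := by
    rintro p hp q hq
    simp only [Set.mem_insert_iff, Set.mem_singleton_iff] at hp hq
    rcases hp with rfl | rfl | rfl | rfl | rfl <;>
      rcases hq with rfl | rfl | rfl | rfl | rfl <;>
      first
        | exact (Commute.refl _).eq
        | exact hst.eq | exact hst.symm.eq
        | exact c1.eq | exact c1.symm.eq
        | exact c2.eq | exact c2.symm.eq
        | exact c3.eq | exact c3.symm.eq
        | exact c4.eq | exact c4.symm.eq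
        | exact c5.eq | exact c5.symm.eq
        | exact c6.eq | exact c6.symm.eq
        | exact c7.eq | exact c7.symm.eq
        | exact c8.eq | exact c8.symm.eq
        | exact c9.eq | exact c9.symm.eq
  set K : Subring A := Subring.closure ({s, t, s₁, t₁, m₁} : Set A) with hK_def
  letI : CommRing K := Subring.closureCommRingOfComm hcomm
  set S : K := ⟨s, Subring.subset_closure (by simp)⟩ with hS_def
  set T : K := ⟨t, Subring.subset_closure (by simp)⟩ with hT_def
  set Sp : K := ⟨s₁, Subring.subset_closure (by simp)⟩ with hSp_def
  set Tp : K := ⟨t₁, Subring.subset_closure (by simp)⟩ with hTp_def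
  set Mp : K := ⟨m₁, Subring.subset_closure (by simp)⟩ with hMp_def
  -- relations in K
  have r1 : S * Sp = 1 := Subtype.ext (by push_cast; exact Ring.mul_inverse_cancel s hus)
  have r2 : T * Tp = 1 := Subtype.ext (by push_cast; exact Ring.mul_inverse_cancel t hut)
  have r3 : (1 - S * S) * Mp = 1 := Subtype.ext (by
    push_cast
    rw [hs]
    exact Ring.mul_inverse_cancel _ hmw)
  have r4 : T * T = 1 + S * S := Subtype.ext (by push_cast; rw [hs]; exact ht)
  -- everything in K is selfadjoint
  have hsa_s : star s = s := (IsSelfAdjoint.of_nonneg (CFC.sqrt_nonneg _))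
  have hsa_t : star t = t := (IsSelfAdjoint.of_nonneg (CFC.sqrt_nonneg _))
  have hsa_w : star w = w := (IsSelfAdjoint.of_nonneg hw0)
  have hsa_s₁ : star s₁ = s₁ := by rw [hs₁_def, ← Ring.inverse_star, hsa_s]
  have hsa_t₁ : star t₁ = t₁ := by rw [ht₁_def, ← Ring.inverse_star, hsa_t]
  have hsa_m₁ : star m₁ = m₁ := by
    rw [hm₁_def, ← Ring.inverse_star, star_sub, star_one, hsa_w]
  have hKC : ∀ z₁ z₂ : K, (z₁ : A) * (z₂ : A) = (z₂ : A) * (z₁ : A) := by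
    intro z₁ z₂
    have : ((z₁ * z₂ : K) : A) = ((z₂ * z₁ : K) : A) := by rw [mul_comm]
    push_cast at this
    exact this
  have hstar : ∀ z : K, star (z : A) = (z : A) := by
    rintro ⟨z, hz⟩
    induction hz using Subring.closure_induction with
    | mem u hu =>
        simp only [Set.mem_insert_iff, Set.mem_singleton_iff] at hu
        rcases hu with rfl | rfl | rfl | rfl | rfl <;> assumption
    | zero => exact star_zero A
    | one => exact star_one A
    | add u v hu hv pu pv => rw [star_add, pu, pv]
    | neg u hu pu => rw [star_neg, pu]
    | mul u v hu hv pu pv =>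
        rw [star_mul, pu, pv]
        exact hKC ⟨v, hv⟩ ⟨u, hu⟩
  -- abbreviations in K
  set KA : K := Tp * S with hKA_def
  set KB : K := Tp with hKB_def
  set KC : K := Tp * Sp * (1 - S * S) with hKC_def
  set KD : K := Tp * (1 - S * S) with hKD_def
  set KG : K := S ^ 2 * Mp ^ 2 with hKG_def
  -- identify the matrix entries
  have hA : a = (KA : A) := by rw [ha, hKA_def]; push_cast; rfl
  have hB : b = (KB : A) := hb
  have hC : c = x₁ * (KC : A) := by
    rw [hc, hKC_def]
    push_cast
    rw [hs]
    simp [mul_assoc]; rfl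
  have hD : d = -(x₁ * (KD : A)) := by
    rw [hd, hKD_def]
    push_cast
    rw [hs]
    simp [mul_assoc]; rfl
  have hy_star : star x₁ = y := by rw [hx₁_def, hy_def, Ring.inverse_star]
  -- key identities in K
  have E1 : KA * KA + KB * KB = 1 := by
    rw [hKA_def, hKB_def]
    linear_combination (1 + T*Tp) * r2 - Tp^2 * r4
  have E2 : KA * KC = KB * KD := by
    rw [hKA_def, hKB_def, hKC_def, hKD_def]
    linear_combination (Tp^2 - S^2*Tp^2) * r1
  have E3 : KC * KC + KD * KD = (1 - S * S)^2 * Sp^2 := by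
    rw [hKC_def, hKD_def]
    linear_combination (2 - 3*Tp^2 + 2*S*Sp - 3*S*Sp*Tp^2 - S^2 + S^2*Tp^2 - S^3*Sp + S^3*Sp*Tp^2) * r1
      + (-2 - 2*T*Tp + Sp^2 + Sp^2*T*Tp + S^2 + S^2*T*Tp) * r2
      + (2*Tp^2 - Sp^2*Tp^2 - S^2*Tp^2) * r4
  have E5 : KA * KA + KC * (KG * KC) = 1 := by
    rw [hKA_def, hKC_def, hKG_def]
    linear_combination (Tp^2*Mp^2 + S*Sp*Tp^2*Mp^2 - 2*S^2*Tp^2*Mp^2 - 2*S^3*Sp*Tp^2*Mp^2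
        + S^4*Tp^2*Mp^2 + S^5*Sp*Tp^2*Mp^2) * r1
      + (1 + T*Tp) * r2
      + (Tp^2 + Tp^2*Mp - S^2*Tp^2*Mp) * r3
      - Tp^2 * r4
  have E6 : KA * KB = KC * (KG * KD) := by
    rw [hKA_def, hKB_def, hKC_def, hKD_def, hKG_def]
    linear_combination (-(S*Tp^2*Mp^2) + 2*S^3*Tp^2*Mp^2 - S^5*Tp^2*Mp^2) * r1
      + (-(S*Tp^2) - S*Tp^2*Mp + S^3*Tp^2*Mp) * r3
  have E7 : KB * KB + KD * (KG * KD) = 1 := by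
    rw [hKB_def, hKD_def, hKG_def]
    linear_combination (1 + T*Tp) * r2
      + (S^2*Tp^2 + S^2*Tp^2*Mp - S^4*Tp^2*Mp) * r3
      - Tp^2 * r4
  -- auxiliary facts about x
  have hxy : star x * y = 1 := Ring.mul_inverse_cancel (star x) hx.star
  have hx₁x : x₁ * x = 1 := Ring.inverse_mul_cancel x hx
  have hs₁s₁ : s₁ * s₁ = Ring.inverse w := by
    rw [hs₁_def, ← Ring.mul_inverse_rev' (Commute.refl s), hs]
  -- value of KG and the key inverse identity
  have hKGval : (KG : A) = w * (m₁ * m₁) := by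
    rw [hKG_def]
    push_cast
    rw [sq, sq, hs]
  have hxxG : (x * star x) * (KG : A) = 1 := by
    rw [hxx, hKGval]
    calc (1 - w)^2 * Ring.inverse w * (w * (m₁ * m₁))
        = (1 - w)^2 * (Ring.inverse w * w) * (m₁ * m₁) := by
          rw [mul_assoc, mul_assoc, mul_assoc]
      _ = (1 - w)^2 * (m₁ * m₁) := by rw [Ring.inverse_mul_cancel w hw, mul_one]
      _ = ((1 - w) * m₁)^2 := by
          rw [((Commute.refl (1-w)).ringInverse_right hmw).mul_pow, pow_two m₁]
      _ = 1 := by rw [Ring.mul_inverse_cancel _ hmw, one_pow]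
  have hyx₁ : y * x₁ = (KG : A) := by
    have h2 : (y * x₁) * (x * star x) = 1 := by
      rw [mul_assoc, ← mul_assoc x₁, hx₁x, one_mul, hy_def]
      exact Ring.inverse_mul_cancel (star x) hx.star
    calc y * x₁ = (y * x₁) * ((x * star x) * (KG : A)) := by rw [hxxG, mul_one]
      _ = ((y * x₁) * (x * star x)) * (KG : A) := by noncomm_ring
      _ = (KG : A) := by rw [h2, one_mul]
    -- star of entries
  have hsc' : star c = (KC : A) * y := by rw [hC, star_mul, hstar, hy_star]
  have hsd' : star d = -((KD : A) * y) := by rw [hD, star_neg, star_mul, hstar, hy_star]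
  have hsa' : star a = (KA : A) := by rw [hA, hstar]
  have hsb' : star b = (KB : A) := by rw [hB, hstar]
  -- coerced identities
  have e1 := congrArg (fun z : K => (z : A)) E1
  have e2 := congrArg (fun z : K => (z : A)) E2
  have e3 := congrArg (fun z : K => (z : A)) E3
  have e5 := congrArg (fun z : K => (z : A)) E5
  have e6 := congrArg (fun z : K => (z : A)) E6
  have e7 := congrArg (fun z : K => (z : A)) E7
  push_cast at e1 e2 e3 e5 e6 e7
  rw [hs] at e3
  rw [sq s₁, hs₁s₁] at e3
  -- the eight entry identities
  have u00 : a * star a + b * star b = 1 := by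
    rw [hsa', hsb', hA, hB]; exact e1
  have u01 : a * star c + b * star d = 0 := by
    calc a * star c + b * star d
        = (KA : A) * (KC : A) * y - (KB : A) * (KD : A) * y := by
          rw [hsc', hsd', hA, hB]; noncomm_ring
      _ = 0 := by rw [e2, sub_self]
  have u10 : c * star a + d * star b = 0 := by
    have := congrArg star u01
    simpa using this
  have u11 : c * star c + d * star d = 1 := by
    calc c * star c + d * star d
        = x₁ * (((KC : A) * (KC : A) + (KD : A) * (KD : A)) * y) := by
          rw [hsc', hsd', hC, hD]; noncomm_ring
      _ = x₁ * (((1 - w)^2 * Ring.inverse w) * y) := by rw [e3]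
      _ = (x₁ * x) * (star x * y) := by rw [← hxx]; noncomm_ring
      _ = 1 := by rw [hx₁x, hxy, one_mul]
  have v00 : star a * a + star c * c = 1 := by
    calc star a * a + star c * c
        = (KA : A) * (KA : A) + (KC : A) * ((y * x₁) * (KC : A)) := by
          rw [hsa', hsc', hA, hC]; noncomm_ring
      _ = (KA : A) * (KA : A) + (KC : A) * ((KG : A) * (KC : A)) := by rw [hyx₁]
      _ = 1 := e5
  have v01 : star a * b + star c * d = 0 := by
    calc star a * b + star c * d
        = (KA : A) * (KB : A) - (KC : A) * ((y * x₁) * (KD : A)) := by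
          rw [hsa', hsc', hB, hD]; noncomm_ring
      _ = (KA : A) * (KB : A) - (KC : A) * ((KG : A) * (KD : A)) := by rw [hyx₁]
      _ = 0 := by rw [e6, sub_self]
  have v10 : star b * a + star d * c = 0 := by
    have := congrArg star v01
    simpa using this
  have v11 : star b * b + star d * d = 1 := by
    calc star b * b + star d * d
        = (KB : A) * (KB : A) + (KD : A) * ((y * x₁) * (KD : A)) := by
          rw [hsb', hsd', hB, hD]; noncomm_ring
      _ = (KB : A) * (KB : A) + (KD : A) * ((KG : A) * (KD : A)) := by rw [hyx₁]
      _ = 1 := e7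
  -- assemble the matrix identities
  have hstarM : star !![a, b; c, d] = !![star a, star c; star b, star d] :=
    star_fin_two a b c d
  constructor
  · rw [hstarM, Matrix.mul_fin_two, u00, u01, u10, u11, Matrix.one_fin_two]
  · rw [hstarM, Matrix.mul_fin_two, v00, v01, v10, v11, Matrix.one_fin_two]
end

section
/- Let A be a unital C*-algebra, x ∈ A invertible, w ∈ A positive invertible with ‖w‖ < 1 and x x* = (1-w)^2 w⁻¹. Define a = (1+w)^{-1/2} w^{1/2}, b = (1+w)^{-1/2}, c = x⁻¹ (1+w)^{-1/2} w^{-1/2} (1-w), d = -x⁻¹ (1+w)^{-1/2} (1-w). Then a* a + c* c = 1, b* b + d* d = 1, a c* + b d* = 0, and a* b + c* d = 0. -/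
open scoped NNReal

section helpers
variable {A : Type*} [Ring A]

private lemma lc {a b : A} (h : Commute a b) (c : A) : a * (b * c) = b * (a * c) := by
  rw [← mul_assoc, h.eq, mul_assoc]

private lemma mic {a : A} (ha : IsUnit a) (c : A) : a * (Ring.inverse a * c) = c := by
  rw [← mul_assoc, Ring.mul_inverse_cancel _ ha, one_mul]

private lemma imc {a : A} (ha : IsUnit a) (c : A) : Ring.inverse a * (a * c) = c := by
  rw [← mul_assoc, Ring.inverse_mul_cancel _ ha, one_mul]

private lemma comm_inv {a b : A} (h : Commute a b) (hb : IsUnit b) :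
    Commute a (Ring.inverse b) := by
  obtain ⟨u, rfl⟩ := hb
  rw [Ring.inverse_unit]
  exact h.units_inv_right

private lemma inv_mul_rev {a b : A} (ha : IsUnit a) (hb : IsUnit b) :
    Ring.inverse (a * b) = Ring.inverse b * Ring.inverse a := by
  obtain ⟨u, rfl⟩ := ha
  obtain ⟨v, rfl⟩ := hb
  rw [← Units.val_mul, Ring.inverse_unit, Ring.inverse_unit, Ring.inverse_unit, mul_inv_rev,
    Units.val_mul]

private lemma inv_inv' {a : A} (ha : IsUnit a) : Ring.inverse (Ring.inverse a) = a := by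
  obtain ⟨u, rfl⟩ := ha
  rw [Ring.inverse_unit, Ring.inverse_unit, inv_inv]
end helpers


/-- Column relations for the matrix `U` from Lemma 4. -/
theorem stmt_17 {A : Type*} [CStarAlgebra A] [PartialOrder A] [StarOrderedRing A]
    (x w a b c d : A) (hx : IsUnit x) (hw0 : 0 ≤ w) (hw : IsUnit w) (hwn : ‖w‖ < 1)
    (hxx : x * star x = (1 - w)^2 * Ring.inverse w)
    (ha : a = Ring.inverse (CFC.sqrt (1 + w)) * CFC.sqrt w)
    (hb : b = Ring.inverse (CFC.sqrt (1 + w)))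
    (hc : c = Ring.inverse x * Ring.inverse (CFC.sqrt (1 + w)) * Ring.inverse (CFC.sqrt w) * (1 - w))
    (hd : d = -(Ring.inverse x * Ring.inverse (CFC.sqrt (1 + w)) * (1 - w))) :
    star a * a + star c * c = 1 ∧ star b * b + star d * d = 1 ∧
    a * star c + b * star d = 0 ∧ star a * b + star c * d = 0 := by
  have hw1 : (0:A) ≤ 1 + w := add_nonneg zero_le_one hw0
  set s := CFC.sqrt w with hs_def
  set t := CFC.sqrt (1 + w) with ht_def
  set y := Ring.inverse x with hy_def
  set S := Ring.inverse s with hS_def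
  set T := Ring.inverse t with hT_def
  set R := Ring.inverse (1 - w) with hR_def
  set P := Ring.inverse (1 + w) with hP_def
  have hss : s * s = w := CFC.sqrt_mul_sqrt_self w hw0
  have htt : t * t = 1 + w := CFC.sqrt_mul_sqrt_self _ hw1
  -- units
  have hsu : IsUnit s := by
    rw [hs_def, CFC.sqrt_eq_cfc]
    exact isUnit_cfc (R := ℝ≥0) _ w (by fun_prop) hw0 (fun r hr => by
      simp only [ne_eq, NNReal.sqrt_eq_zero]
      exact fun h => spectrum.zero_notMem ℝ≥0 hw (h ▸ hr))
  have ht_cfc : t = cfc (fun r : ℝ≥0 => NNReal.sqrt (1 + r)) w := by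
    have h1w : (1 : A) + w = cfc (fun r : ℝ≥0 => 1 + r) w := by
      rw [cfc_add w (fun _ => 1) (fun r => r), cfc_const_one ℝ≥0 w, cfc_id' ℝ≥0 w]
    rw [ht_def, h1w, CFC.sqrt_eq_cfc, ← cfc_comp' NNReal.sqrt (fun r : ℝ≥0 => 1 + r) w]
  have htu : IsUnit t := by
    rw [ht_cfc]
    exact isUnit_cfc (R := ℝ≥0) _ w (by fun_prop) hw0 (fun r hr => by simp)
  have hmu : IsUnit (1 - w) := isUnit_one_sub_of_norm_lt_one hwn
  have h1wu : IsUnit (1 + w) := htt ▸ htu.mul htu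
  -- commutation (base)
  have c_st : Commute s t := by
    rw [hs_def, CFC.sqrt_eq_cfc, ht_cfc]; exact cfc_commute_cfc _ _ w
  have c_sw : Commute s w := hss ▸ (Commute.refl s).mul_right (Commute.refl s)
  have c_tw : Commute t w := by
    have h1 : Commute t (1 + w) := htt ▸ (Commute.refl t).mul_right (Commute.refl t)
    simpa using h1.sub_right (Commute.one_right t)
  have c_sm : Commute s (1 - w) := (Commute.one_right s).sub_right c_sw
  have c_tm : Commute t (1 - w) := (Commute.one_right t).sub_right c_tw
  have c_wm : Commute w (1 - w) := (Commute.one_right w).sub_right (Commute.refl w)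
  have c_s1 : Commute s (1 + w) := (Commute.one_right s).add_right c_sw
  have c_w1 : Commute w (1 + w) := (Commute.one_right w).add_right (Commute.refl w)
  -- commutation (derived, with inverses)
  have c_mS : Commute (1 - w) S := comm_inv c_sm.symm hsu
  have c_mT : Commute (1 - w) T := comm_inv c_tm.symm htu
  have c_mw : Commute (1 - w) w := c_wm.symm
  have c_RT : Commute R T := (comm_inv c_mT.symm hmu).symm
  have c_RS : Commute R S := (comm_inv c_mS.symm hmu).symm
  have c_wT : Commute w T := comm_inv c_tw.symm htu
  have c_Ps : Commute P s := (comm_inv c_s1 h1wu).symm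
  have c_PS : Commute P S := comm_inv c_Ps hsu
  have c_Pw : Commute P w := (comm_inv c_w1 h1wu).symm
  have c_Sw : Commute S w := (comm_inv c_sw.symm hsu).symm
  -- squares of inverses
  have hTT' : T * T = P := by rw [hT_def, ← inv_mul_rev htu htu, htt, hP_def]
  have hTTz : ∀ z : A, T * (T * z) = P * z := fun z => by rw [← mul_assoc, hTT']
  have hSS' : S * S = Ring.inverse w := by rw [hS_def, ← inv_mul_rev hsu hsu, hss]
  -- star facts
  have sts : star s = s := (IsSelfAdjoint.of_nonneg (CFC.sqrt_nonneg _)).star_eq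
  have stt : star t = t := (IsSelfAdjoint.of_nonneg (CFC.sqrt_nonneg _)).star_eq
  have stw : star w = w := (IsSelfAdjoint.of_nonneg hw0).star_eq
  have stm : star (1 - w) = 1 - w := by rw [star_sub, star_one, stw]
  have stS : star S = S := by rw [hS_def, ← Ring.inverse_star, sts]
  have stT : star T = T := by rw [hT_def, ← Ring.inverse_star, stt]
  -- key identity
  have key : star y * y = w * (R * R) := by
    rw [hy_def, ← Ring.inverse_star, ← inv_mul_rev hx hx.star, hxx,
      inv_mul_rev (hmu.pow 2) (by rw [Ring.inverse_of_isUnit hw]; exact Units.isUnit _),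
      ← Ring.inverse_pow, pow_two, inv_inv' hw, hR_def]
  have hyy : ∀ z : A, star y * (y * z) = w * (R * (R * z)) := fun z => by
    rw [← mul_assoc, key, mul_assoc, mul_assoc]
  -- the four matrix entries
  have A1 : star a * a = w * P := by
    rw [ha, star_mul, sts, stT]
    rw [mul_assoc, hTTz, c_Ps.eq, ← mul_assoc, hss]
  have C1 : star c * c = P := by
    rw [hc]
    simp only [star_mul, stm, stS, stT, mul_assoc]
    rw [hyy, lc c_mS, lc c_mT, lc c_mw, mic hmu, lc c_RT, lc c_RS,
      Ring.inverse_mul_cancel _ hmu, mul_one, lc c_wT, hTTz, lc c_Pw, c_PS.eq,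
      lc c_Sw.symm, ← mul_assoc S S, hSS', imc hw]
  have B1 : star b * b = P := by
    rw [hb, stT, hTT']
  have D1 : star d * d = P * w := by
    rw [hd]
    simp only [star_neg, star_mul, stm, stT, neg_mul_neg, mul_assoc]
    rw [hyy, lc c_mT, lc c_mw, mic hmu, lc c_RT, Ring.inverse_mul_cancel _ hmu, mul_one,
      c_wT.eq, hTTz]
  have G3a : a * star c = P * ((1 - w) * star y) := by
    rw [ha, hc]
    simp only [star_mul, stm, stS, stT, mul_assoc]
    rw [lc c_sm, mic hsu, lc c_mT, hTTz]
  have G3b : b * star d = -(P * ((1 - w) * star y)) := by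
    rw [hb, hd]
    simp only [star_neg, star_mul, stm, stT, mul_neg, mul_assoc]
    rw [lc c_mT, hTTz]
  have G4a : star a * b = s * P := by
    rw [ha, hb, star_mul, sts, stT, mul_assoc, hTT']
  have G4b : star c * d = -(s * P) := by
    rw [hc, hd]
    simp only [star_mul, stm, stS, stT, mul_neg, mul_assoc]
    rw [hyy, lc c_mS, lc c_mT, lc c_mw, mic hmu, lc c_RT, Ring.inverse_mul_cancel _ hmu,
      mul_one, c_wT.eq, hTTz, c_Pw.eq, ← mul_assoc S w, ← hss, ← mul_assoc S s,
      Ring.inverse_mul_cancel _ hsu, one_mul]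
  refine ⟨?_, ?_, ?_, ?_⟩
  · rw [A1, C1]
    calc w * P + P = (1 + w) * P := by rw [add_mul, one_mul, add_comm]
      _ = 1 := Ring.mul_inverse_cancel _ h1wu
  · rw [B1, D1]
    calc P + P * w = P * (1 + w) := by rw [mul_add, mul_one]
      _ = 1 := Ring.inverse_mul_cancel _ h1wu
  · rw [G3a, G3b, add_neg_cancel]
  · rw [G4a, G4b, add_neg_cancel]
end
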